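/- For each n ≥ 0, the assignment a_u ↦ Σ_{(x₁,…,x_{k_u}) ∈ X₁ᵘ×⋯×X_{k_u}ᵘ} a_{v(x₁,…,x_{k_u})} for u ∈ E_n^{0,0} (where C^n_u = {X₁ᵘ,…,X_{k_u}ᵘ}) and a_w ↦ a_w for w ∈ E_n^{0,1} extends to a well-defined injective monoid homomorphism ι_n : M(E_n,C^n) → M(E_{n+1},C^{n+1}). -/

import Mathlib

/-- A bipartite separated graph: all edges go from a vertex of `V1 = E^{0,1}` to a
vertex of `V0 = E^{0,0}`, and `C v` is a family of subsets of `r⁻¹(v)`. -/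
structure BSG where
  V0 : Type
  V1 : Type
  E : Type
  s : E → V1
  r : E → V0
  C : V0 → Set (Set E)

/-- Being a finite bipartite separated graph. -/
structure BSG.Valid (G : BSG) : Prop where
  finV0 : Finite G.V0
  finV1 : Finite G.V1
  finE : Finite G.E
  mem_r : ∀ v X, X ∈ G.C v → ∀ e ∈ X, G.r e = v
  nonempty_class : ∀ v X, X ∈ G.C v → X.Nonempty
  disj : ∀ v, (G.C v).PairwiseDisjoint id
  cover : ∀ e : G.E, ∃ X ∈ G.C (G.r e), e ∈ X
  C_nonempty : ∀ v : G.V0, (G.C v).Nonempty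
  s_surj : Function.Surjective G.s

/-- The set of new vertices `v(x₁,…,x_{k_u})` of the graph `(E₁, C¹)`: pairs of a
vertex `u ∈ E^{0,0}` and a choice of one edge from each class of `C_u`. -/
def BSG.NewVert (G : BSG) : Type :=
  Σ u : G.V0, (X : {X : Set G.E // X ∈ G.C u}) → ↥X.1

/-- The set of edges of `(E₁, C¹)`: an edge `α^{xᵢ}(x₁,…,x̂ᵢ,…,x_{k_u})` is encoded as
the pair of its source vertex `v(x₁,…,x_{k_u})` and the class containing `xᵢ`. -/
def BSG.NewEdge (G : BSG) : Type :=
  Σ p : G.NewVert, {X : Set G.E // X ∈ G.C p.1}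

/-- The edge `xᵢ ∈ E¹` attached to an edge `α^{xᵢ}(…)` of `(E₁,C¹)`. -/
def BSG.edgeOf (G : BSG) (e : G.NewEdge) : G.E := (e.1.2 e.2 : G.E)

/-- The class `X(x) = {α^{x}(…)} ⊆ E₁¹` attached to an edge `x ∈ E¹`. -/
def BSG.Xof (G : BSG) (x : G.E) : Set G.NewEdge := {e | G.edgeOf e = x}

/-- The finite bipartite separated graph `(E₁, C¹)` associated to `(E,C)`:
`E₁^{0,0} = E^{0,1}`, `E₁^{0,1}` is the set of new vertices `v(x₁,…,x_{k_u})`, the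
edge `α^{xᵢ}(…)` has source `v(x₁,…,x_{k_u})` and range `s(xᵢ)`, and
`C¹_w = {X(x) : x ∈ s⁻¹(w)}`. -/
def BSG.next (G : BSG) : BSG where
  V0 := G.V1
  V1 := G.NewVert
  E := G.NewEdge
  s := fun e => e.1
  r := fun e => G.s (G.edgeOf e)
  C := fun w => {S | ∃ x : G.E, G.s x = w ∧ S = G.Xof x}

/-- The defining relations of the graph monoid `M(E,C)` of a bipartite separated
graph: `a_v = Σ_{e∈X} a_{s(e)}` for every `v ∈ E^{0,0}` and every `X ∈ C_v`. -/
def BipRel (H : BSG) {N : Type} [AddCommMonoid N] (a : H.V0 ⊕ H.V1 → N) : Prop :=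
  ∀ v : H.V0, ∀ Y ∈ H.C v, a (Sum.inl v) = ∑ᶠ e ∈ Y, a (Sum.inr (H.s e))

/-- `(M, a)` is the graph monoid `M(E,C)` of the bipartite separated graph `H`. -/
def IsBipGraphMonoid (H : BSG) {M : Type} [AddCommMonoid M] (a : H.V0 ⊕ H.V1 → M) : Prop :=
  BipRel H a ∧ ∀ (N : Type) [AddCommMonoid N] (b : H.V0 ⊕ H.V1 → N), BipRel H b →
    ∃! φ : M →+ N, ∀ p, φ (a p) = b p


namespace Stmt15Aux

attribute [local instance] Classical.propDecidable

open Multiset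

lemma sum_singleton_map {α β : Type} (s : Finset α) (f : α → β) :
    ∑ x ∈ s, ({f x} : Multiset β) = s.val.map f := by
  show (s.val.map fun x => ({f x} : Multiset β)).sum = _
  rw [show (fun x => ({f x} : Multiset β)) = (fun b => ({b} : Multiset β)) ∘ f from rfl,
    ← Multiset.map_map, Multiset.sum_map_singleton]

abbrev FM (H : BSG) := Multiset (H.V0 ⊕ H.V1)

noncomputable def msum (H : BSG) [Finite H.E] (Y : Set H.E) : FM H :=
  Y.toFinite.toFinset.val.map fun e => Sum.inr (H.s e)

def BRel (H : BSG) [Finite H.E] : FM H → FM H → Prop :=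
  fun a b => ∃ v Y, Y ∈ H.C v ∧ a = {Sum.inl v} ∧ b = msum H Y

noncomputable def mcon (H : BSG) [Finite H.E] : AddCon (FM H) := addConGen (BRel H)

lemma mcon_of (H : BSG) [Finite H.E] {v : H.V0} {Y : Set H.E} (hY : Y ∈ H.C v) :
    mcon H {Sum.inl v} (msum H Y) :=
  AddConGen.Rel.of _ _ ⟨v, Y, hY, rfl, rfl⟩

noncomputable def mA (H : BSG) [Finite H.E] : H.V0 ⊕ H.V1 → (mcon H).Quotient :=
  fun p => (mcon H).mk' {p}

noncomputable def homM (H : BSG) {N : Type} [AddCommMonoid N] (b : H.V0 ⊕ H.V1 → N) :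
    FM H →+ N where
  toFun m := (m.map b).sum
  map_zero' := by simp
  map_add' x y := by simp

lemma homM_single (H : BSG) {N : Type} [AddCommMonoid N] (b : H.V0 ⊕ H.V1 → N)
    (p : H.V0 ⊕ H.V1) : homM H b {p} = b p := by
  show (Multiset.map b {p}).sum = b p
  simp

lemma finsum_mem_set_eq (H : BSG) [Finite H.E] {N : Type} [AddCommMonoid N]
    (g : H.E → N) (Y : Set H.E) : (∑ᶠ e ∈ Y, g e) = ∑ e ∈ Y.toFinite.toFinset, g e := by
  have := finsum_mem_coe_finset g Y.toFinite.toFinset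
  simp only [Set.Finite.coe_toFinset] at this
  exact this

lemma homM_msum (H : BSG) [Finite H.E] {N : Type} [AddCommMonoid N] (b : H.V0 ⊕ H.V1 → N)
    (Y : Set H.E) : homM H b (msum H Y) = ∑ᶠ e ∈ Y, b (Sum.inr (H.s e)) := by
  rw [finsum_mem_set_eq]
  show ((msum H Y).map b).sum = _
  unfold msum
  rw [Multiset.map_map]
  rfl

lemma model_bipRel (H : BSG) [Finite H.E] : BipRel H (mA H) := by
  intro v Y hY
  have key : ∑ᶠ e ∈ Y, mA H (Sum.inr (H.s e)) = (mcon H).mk' (msum H Y) := by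
    rw [finsum_mem_set_eq]
    simp only [mA]
    rw [← map_sum ((mcon H).mk'), sum_singleton_map]
    rfl
  rw [key]
  exact (AddCon.eq _).2 (mcon_of H hY)

lemma model_isBip (H : BSG) [Finite H.E] : IsBipGraphMonoid H (mA H) := by
  refine ⟨model_bipRel H, fun N _ b hb => ?_⟩
  have hker : mcon H ≤ AddCon.ker (homM H b) := by
    apply AddCon.addConGen_le.2
    rintro x y ⟨v, Y, hY, rfl, rfl⟩
    rw [AddCon.ker_rel, homM_single, homM_msum, hb v Y hY]
  refine ⟨(mcon H).lift (homM H b) hker, fun p => ?_, fun ψ hψ => ?_⟩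
  · show (mcon H).lift (homM H b) hker ((mcon H).mk' {p}) = b p
    rw [AddCon.lift_mk', homM_single]
  · refine AddCon.lift_unique hker ψ ?_
    refine AddMonoidHom.ext fun (m : FM H) => ?_
    show ψ ((mcon H).mk' m) = (m.map b).sum
    induction m using Multiset.induction_on with
    | empty => simp
    | cons a s ih =>
      rw [← Multiset.singleton_add, _root_.map_add ((mcon H).mk'), ψ.map_add, ih]
      have h2 : ψ ((mcon H).mk' {a}) = b a := hψ a
      rw [h2]
      simp

lemma transfer (H : BSG) {M N : Type} [AddCommMonoid M] [AddCommMonoid N]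
    {a : H.V0 ⊕ H.V1 → M} {b : H.V0 ⊕ H.V1 → N}
    (ha : IsBipGraphMonoid H a) (hb : IsBipGraphMonoid H b) :
    ∃ (e : M →+ N) (e' : N →+ M), (∀ p, e (a p) = b p) ∧ (∀ p, e' (b p) = a p) ∧
      ∀ m, e' (e m) = m := by
  obtain ⟨e, he, -⟩ := ha.2 N b hb.1
  obtain ⟨e', he', -⟩ := hb.2 M a ha.1
  obtain ⟨i, hi, hiu⟩ := ha.2 M a ha.1
  have h1 : e'.comp e = AddMonoidHom.id M := by
    rw [hiu (e'.comp e) (fun p => by simp [he, he']), hiu (AddMonoidHom.id M) (fun p => by simp)]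
  exact ⟨e, e', he, he', fun m => DFunLike.congr_fun h1 m⟩

end Stmt15Aux
namespace Stmt15Aux
open Multiset

attribute [local instance] Classical.propDecidable

noncomputable def dec {α : Type} (n : α → ℕ) (A : Set α) : α → ℕ := fun y => if y ∈ A then n y - 1 else n y
noncomputable def inc {α : Type} (n : α → ℕ) (A : Set α) : α → ℕ := fun y => if y ∈ A then n y + 1 else n y

section Graph

variable (G : BSG) [Fintype G.E] [Fintype G.NewVert]

def hits (p : G.NewVert) (y : G.E) : Prop := ∃ X, ((p.2 X : G.E) = y)

noncomputable def S (y : G.E) : Multiset G.NewVert :=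
  (Finset.univ.filter (fun p : G.NewVert => hits G p y)).val

noncomputable def T (u : G.V0) : Multiset G.NewVert :=
  (Finset.univ.filter (fun p : G.NewVert => p.1 = u)).val

noncomputable def sumS (n : G.E → ℕ) : Multiset G.NewVert := ∑ y : G.E, n y • S G y

noncomputable def imgE (n : G.E → ℕ) : FM G :=
  ∑ y : G.E, n y • ({Sum.inr (G.s y)} : FM G)

noncomputable def rho (A : Set G.E) : FM G :=
  ∑ y ∈ A.toFinset, ({Sum.inr (G.s y)} : FM G)

lemma sum_split {M : Type} [AddCommMonoid M] (f : G.E → M) (n : G.E → ℕ) (A : Set G.E)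
    (h : ∀ y ∈ A, 1 ≤ n y) :
    ∑ y : G.E, n y • f y = (∑ y : G.E, dec n A y • f y) + ∑ y ∈ A.toFinset, f y := by
  have key : ∀ y : G.E, n y • f y = dec n A y • f y + (if y ∈ A.toFinset then f y else 0) := by
    intro y
    by_cases hy : y ∈ A
    · simp only [dec, if_pos hy, Set.mem_toFinset]
      rw [← succ_nsmul, Nat.sub_add_cancel (h y hy)]
    · simp [dec, hy, Set.mem_toFinset]
  rw [Finset.sum_congr rfl (fun y _ => key y), Finset.sum_add_distrib, Finset.sum_ite_mem,
    Finset.univ_inter]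

lemma sum_inc {M : Type} [AddCommMonoid M] (f : G.E → M) (n : G.E → ℕ) (A : Set G.E) :
    ∑ y : G.E, inc n A y • f y = (∑ y : G.E, n y • f y) + ∑ y ∈ A.toFinset, f y := by
  have key : ∀ y : G.E, inc n A y • f y = n y • f y + (if y ∈ A.toFinset then f y else 0) := by
    intro y
    by_cases hy : y ∈ A
    · simp only [inc, if_pos hy, Set.mem_toFinset]
      rw [succ_nsmul]
    · simp [inc, hy, Set.mem_toFinset]
  rw [Finset.sum_congr rfl (fun y _ => key y), Finset.sum_add_distrib, Finset.sum_ite_mem,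
    Finset.univ_inter]

variable {G}

lemma classinj (hG : G.Valid) (u : G.V0) (t : (X : {X : Set G.E // X ∈ G.C u}) → ↥X.1) :
    Function.Injective (fun X => ((t X : G.E))) := by
  intro X₁ X₂ h
  by_contra hne
  have hne' : X₁.1 ≠ X₂.1 := fun hh => hne (Subtype.ext hh)
  have hd := hG.disj u X₁.2 X₂.2 hne'
  have h' : ((t X₁ : G.E)) = ((t X₂ : G.E)) := h
  refine (Set.disjoint_left.1 hd) (t X₁).2 ?_
  show ((t X₁ : G.E)) ∈ X₂.1
  rw [h']
  exact (t X₂).2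

variable (G)

noncomputable def tch (u : G.V0) (x : G.E)
    (f : (X : {X : Set G.E // X ∈ G.C u}) → ¬ x ∈ X.1 → ↥X.1) :
    (X : {X : Set G.E // X ∈ G.C u}) → ↥X.1 :=
  fun X => if h : x ∈ X.1 then ⟨x, h⟩ else f X h

lemma tch_pos {u : G.V0} {x : G.E} {f} (X : {X : Set G.E // X ∈ G.C u}) (h : x ∈ X.1) :
    ((tch G u x f X : G.E)) = x := by simp [tch, h]

lemma tch_neg {u : G.V0} {x : G.E} {f} (X : {X : Set G.E // X ∈ G.C u}) (h : ¬ x ∈ X.1) :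
    tch G u x f X = f X h := by simp [tch, h]

lemma count_S (p : G.NewVert) (y : G.E) :
    (S G y).count p = if hits G p y then 1 else 0 := by
  by_cases h : hits G p y
  · rw [if_pos h]
    exact Multiset.count_eq_one_of_mem (Finset.univ.filter _).nodup
      (Finset.mem_filter.2 ⟨Finset.mem_univ _, h⟩)
  · rw [if_neg h, Multiset.count_eq_zero]
    intro hmem
    exact h (Finset.mem_filter.1 hmem).2

lemma count_T (p : G.NewVert) (u : G.V0) :
    (T G u).count p = if p.1 = u then 1 else 0 := by
  by_cases h : p.1 = u
  · rw [if_pos h]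
    exact Multiset.count_eq_one_of_mem (Finset.univ.filter _).nodup
      (Finset.mem_filter.2 ⟨Finset.mem_univ _, h⟩)
  · rw [if_neg h, Multiset.count_eq_zero]
    intro hmem
    exact h (Finset.mem_filter.1 hmem).2

lemma count_sumS (hG : G.Valid) (n : G.E → ℕ) (p : G.NewVert) :
    (sumS G n).count p = ∑ X : {X : Set G.E // X ∈ G.C p.1}, n ((p.2 X : G.E)) := by
  unfold sumS
  rw [Multiset.count_sum']
  have key : ∀ y : G.E, (n y • S G y).count p = if hits G p y then n y else 0 := by
    intro y; rw [Multiset.count_nsmul, count_S]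
    split <;> simp
  rw [Finset.sum_congr rfl fun y _ => key y, ← Finset.sum_filter]
  have hfe : Finset.univ.filter (fun y => hits G p y) =
      Finset.univ.map ⟨fun X => ((p.2 X : G.E)), classinj hG p.1 p.2⟩ := by
    ext y
    simp only [Finset.mem_filter, Finset.mem_univ, true_and, Finset.mem_map,
      Function.Embedding.coeFn_mk]
    exact Iff.rfl
  rw [hfe]
  exact Finset.sum_map Finset.univ _ n

lemma class_sum (hG : G.Valid) {u : G.V0} {A : Set G.E} (hA : A ∈ G.C u) :
    ∑ y ∈ A.toFinset, S G y = T G u := by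
  refine Multiset.ext.2 fun p => ?_
  rw [Multiset.count_sum', count_T]
  rw [Finset.sum_congr rfl (fun y _ => count_S G p y), ← Finset.sum_filter,
    Finset.sum_const, smul_eq_mul, mul_one]
  obtain ⟨v, t⟩ := p
  by_cases hpu : v = u
  · subst hpu
    rw [if_pos rfl]
    apply Finset.card_eq_one.2
    refine ⟨(t ⟨A, hA⟩ : G.E), ?_⟩
    ext y
    simp only [Finset.mem_filter, Set.mem_toFinset, Finset.mem_singleton]
    simp only [hits]
    constructor
    · rintro ⟨hyA, X, hX⟩
      have hyX : y ∈ X.1 := hX ▸ (t X).2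
      have hXA : X.1 = A := by
        by_contra hne
        exact (Set.disjoint_left.1 (hG.disj v X.2 hA hne)) hyX hyA
      have hXe : X = ⟨A, hA⟩ := Subtype.ext hXA
      rw [← hX, hXe]
    · rintro rfl
      exact ⟨(t ⟨A, hA⟩).2, ⟨⟨A, hA⟩, rfl⟩⟩
  · rw [if_neg hpu]
    rw [Finset.card_eq_zero, Finset.filter_eq_empty_iff]
    rintro y hy ⟨X, hX⟩
    have h1 : G.r y = v := hG.mem_r v X.1 X.2 y (hX ▸ (t X).2)
    have h2 : G.r y = u := hG.mem_r u A hA y (Set.mem_toFinset.1 hy)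
    exact hpu (h1 ▸ h2)

lemma rho_rel [Finite G.E] {u : G.V0} {A : Set G.E} (hA : A ∈ G.C u) :
    mcon G {Sum.inl u} (rho G A) := by
  have hre : rho G A = msum G A := by
    unfold rho msum
    rw [sum_singleton_map]
    congr 1
    exact congrArg Finset.val (Set.toFinite_toFinset A).symm
  rw [hre]
  exact mcon_of G hA

lemma swap (hG : G.Valid) [Finite G.E] {u : G.V0} {A B : Set G.E} (hA : A ∈ G.C u)
    (hB : B ∈ G.C u) {m : G.E → ℕ} (hm : ∀ y ∈ A, 1 ≤ m y) :
    sumS G (inc (dec m A) B) = sumS G m ∧ mcon G (imgE G m) (imgE G (inc (dec m A) B)) := by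
  constructor
  · show ∑ y : G.E, inc (dec m A) B y • S G y = sumS G m
    rw [sum_inc, class_sum G hG hB, ← class_sum G hG hA, ← sum_split G (S G) m A hm]
    rfl
  · have h1 : imgE G m = imgE G (dec m A) + rho G A := sum_split G _ m A hm
    have h2 : imgE G (inc (dec m A) B) = imgE G (dec m A) + rho G B := sum_inc G _ _ _
    rw [h1, h2]
    exact (mcon G).add ((mcon G).refl _)
      (((mcon G).symm (rho_rel G hA)).trans (rho_rel G hB))

lemma S_ne_zero (hG : G.Valid) (y : G.E) : S G y ≠ 0 := by
  obtain ⟨X₀, hX₀, hyX₀⟩ := hG.cover y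
  set t : (X : {X : Set G.E // X ∈ G.C (G.r y)}) → ↥X.1 :=
    tch G (G.r y) y (fun X _ =>
      ⟨(hG.nonempty_class _ _ X.2).choose, (hG.nonempty_class _ _ X.2).choose_spec⟩) with htdef
  have hhit : hits G ⟨G.r y, t⟩ y := ⟨⟨X₀, hX₀⟩, tch_pos G _ hyX₀⟩
  intro h0
  have hc : (S G y).count ⟨G.r y, t⟩ = 1 := by erw [count_S, if_pos hhit]
  rw [h0] at hc
  erw [Multiset.count_zero] at hc
  simp at hc

lemma exists_decomp_pos (hG : G.Valid) [Finite G.E] {n : G.E → ℕ} {x : G.E}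
    (hc : ∀ p : G.NewVert, hits G p x → 1 ≤ (sumS G n).count p) :
    ∃ n', sumS G n' = sumS G n ∧ 1 ≤ n' x ∧ mcon G (imgE G n) (imgE G n') := by
  by_cases hx : 1 ≤ n x
  · exact ⟨n, rfl, hx, (mcon G).refl _⟩
  have hnx : n x = 0 := by omega
  obtain ⟨X₀, hX₀, hxX₀⟩ := hG.cover x
  have hhat : ∃ Bc, Bc ∈ G.C (G.r x) ∧ Bc ≠ X₀ ∧ ∀ y ∈ Bc, 1 ≤ n y := by
    by_contra hno
    push_neg at hno
    choose f hf1 hf2 using (fun (X : {X : Set G.E // X ∈ G.C (G.r x)}) (h : ¬ x ∈ X.1) =>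
      hno X.1 X.2 (fun he => h (he ▸ hxX₀)))
    set t : (X : {X : Set G.E // X ∈ G.C (G.r x)}) → ↥X.1 :=
      tch G (G.r x) x (fun X h => ⟨f X h, hf1 X h⟩) with htdef
    have hhit : hits G ⟨G.r x, t⟩ x := ⟨⟨X₀, hX₀⟩, tch_pos G _ hxX₀⟩
    have h1o := hc _ hhit
    erw [count_sumS G hG] at h1o
    have h1 : 1 ≤ ∑ X : {X : Set G.E // X ∈ G.C (G.r x)}, n ((t X : G.E)) := h1o
    have h0 : ∀ X : {X : Set G.E // X ∈ G.C (G.r x)}, n ((t X : G.E)) = 0 := by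
      intro X
      by_cases h : x ∈ X.1
      · rw [htdef, tch_pos G X h]; exact hnx
      · rw [htdef, tch_neg G X h]
        show n (f X h) = 0
        have := hf2 X h; omega
    rw [Finset.sum_congr rfl (fun X _ => h0 X)] at h1
    simp at h1
  obtain ⟨Bc, hBc, hBne, hBpos⟩ := hhat
  obtain ⟨hs, hrel⟩ := swap G hG hBc hX₀ hBpos
  refine ⟨inc (dec n Bc) X₀, hs, ?_, hrel⟩
  have hxBc : x ∉ Bc := fun h => by have := hBpos x h; omega
  simp [inc, dec, hxX₀, hxBc]

lemma card_sumS (m : G.E → ℕ) :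
    Multiset.card (sumS G m) = ∑ y : G.E, m y * Multiset.card (S G y) := by
  unfold sumS
  induction (Finset.univ : Finset G.E) using Finset.induction_on with
  | empty => simp
  | insert _ _ h ih => simp [Finset.sum_insert h, ih]

lemma decomp_unique (hG : G.Valid) [Finite G.E] :
    ∀ (N : ℕ) (m₁ m₂ : G.E → ℕ), (∑ y : G.E, (m₁ y - m₂ y)) = N →
    sumS G m₁ = sumS G m₂ → mcon G (imgE G m₁) (imgE G m₂) := by
  intro N
  induction N using Nat.strong_induction_on with
  | _ N IH =>
  intro m₁ m₂ hN hS
  by_cases hex : ∃ y, m₂ y < m₁ y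
  · obtain ⟨ys, hys⟩ := hex
    obtain ⟨Xs, hXs, hyXs⟩ := hG.cover ys
    have hcnt : ∀ p : G.NewVert, (sumS G m₁).count p = (sumS G m₂).count p := fun p => by
      rw [hS]
    have hhat : ∃ Bc, Bc ∈ G.C (G.r ys) ∧ Bc ≠ Xs ∧ ∀ y ∈ Bc, m₁ y < m₂ y := by
      by_contra hno
      push_neg at hno
      choose f hf1 hf2 using (fun (X : {X : Set G.E // X ∈ G.C (G.r ys)}) (h : ¬ ys ∈ X.1) =>
        hno X.1 X.2 (fun he => h (he ▸ hyXs)))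
      set t : (X : {X : Set G.E // X ∈ G.C (G.r ys)}) → ↥X.1 :=
        tch G (G.r ys) ys (fun X h => ⟨f X h, hf1 X h⟩) with htdef
      have hceqo := hcnt ⟨G.r ys, t⟩
      erw [count_sumS G hG, count_sumS G hG] at hceqo
      have hceq : (∑ X : {X : Set G.E // X ∈ G.C (G.r ys)}, m₁ ((t X : G.E))) =
          ∑ X : {X : Set G.E // X ∈ G.C (G.r ys)}, m₂ ((t X : G.E)) := hceqo
      have hlt : ∑ X : {X : Set G.E // X ∈ G.C (G.r ys)}, m₂ ((t X : G.E)) <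
          ∑ X : {X : Set G.E // X ∈ G.C (G.r ys)}, m₁ ((t X : G.E)) := by
        apply Finset.sum_lt_sum
        · intro X _
          by_cases h : ys ∈ X.1
          · rw [htdef, tch_pos G X h]; omega
          · rw [htdef, tch_neg G X h]; exact hf2 X h
        · refine ⟨⟨Xs, hXs⟩, Finset.mem_univ _, ?_⟩
          rw [htdef, tch_pos G _ hyXs]; exact hys
      omega
    obtain ⟨Bc, hBc, hBne, hBlt⟩ := hhat
    have hBpos : ∀ y ∈ Bc, 1 ≤ m₂ y := fun y hy => by have := hBlt y hy; omega
    obtain ⟨hs2, hrel2⟩ := swap G hG hBc hXs hBpos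
    have hdisj : ∀ y, ¬(y ∈ Bc ∧ y ∈ Xs) := by
      rintro y ⟨h1, h2⟩
      exact (Set.disjoint_left.1 (hG.disj (G.r ys) hBc hXs hBne)) h1 h2
    have hval : ∀ y, inc (dec m₂ Bc) Xs y =
        if y ∈ Bc then m₂ y - 1 else if y ∈ Xs then m₂ y + 1 else m₂ y := by
      intro y
      by_cases h1 : y ∈ Bc <;> by_cases h2 : y ∈ Xs
      · exact (hdisj y ⟨h1, h2⟩).elim
      all_goals simp [inc, dec, h1, h2]
    have hNlt : (∑ y : G.E, (m₁ y - inc (dec m₂ Bc) Xs y)) < N := by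
      rw [← hN]
      apply Finset.sum_lt_sum
      · intro y _
        rw [hval y]
        by_cases h1 : y ∈ Bc
        · rw [if_pos h1]; have := hBlt y h1; omega
        · rw [if_neg h1]
          by_cases h2 : y ∈ Xs
          · rw [if_pos h2]; omega
          · rw [if_neg h2]
      · refine ⟨ys, Finset.mem_univ _, ?_⟩
        rw [hval ys, if_neg (fun h => hdisj ys ⟨h, hyXs⟩), if_pos hyXs]
        omega
    have hrec := IH _ hNlt m₁ (inc (dec m₂ Bc) Xs) rfl (hS.trans hs2.symm)
    exact hrec.trans ((mcon G).symm hrel2)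
  · push_neg at hex
    have key : ∀ y : G.E, m₁ y = m₂ y := by
      by_contra hk
      push_neg at hk
      obtain ⟨y0, hy0⟩ := hk
      have hlt : m₁ y0 < m₂ y0 := lt_of_le_of_ne (hex y0) hy0
      have hcard : Multiset.card (sumS G m₁) < Multiset.card (sumS G m₂) := by
        rw [card_sumS, card_sumS]
        apply Finset.sum_lt_sum
        · intro y _
          exact Nat.mul_le_mul_right _ (hex y)
        · refine ⟨y0, Finset.mem_univ _, ?_⟩
          have hpos : 0 < Multiset.card (S G y0) := Multiset.card_pos.2 (S_ne_zero G hG y0)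
          exact Nat.mul_lt_mul_of_lt_of_le hlt (le_refl _) hpos
      rw [hS] at hcard
      omega
    rw [show m₁ = m₂ from funext key]
    exact (mcon G).refl _

end Graph
end Stmt15Aux
namespace Stmt15Aux
open Multiset

attribute [local instance] Classical.propDecidable

section Next

variable (G : BSG) [Fintype G.E] [Fintype G.NewVert]

lemma count_inl_map_inr {α β : Type} (w : α) (s : Multiset β) :
    ((s.map (Sum.inr : β → α ⊕ β)).count (Sum.inl w)) = 0 := by
  rw [Multiset.count_eq_zero]
  intro hmem
  obtain ⟨b, -, hb⟩ := Multiset.mem_map.1 hmem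
  cases hb

lemma count_inr_map_inl {α β : Type} (w : β) (s : Multiset α) :
    ((s.map (Sum.inl : α → α ⊕ β)).count (Sum.inr w)) = 0 := by
  rw [Multiset.count_eq_zero]
  intro hmem
  obtain ⟨b, -, hb⟩ := Multiset.mem_map.1 hmem
  cases hb

lemma parts_eq {α β : Type} {a c : Multiset α} {b d : Multiset β}
    (h : a.map Sum.inl + b.map Sum.inr = c.map Sum.inl + d.map Sum.inr) :
    a = c ∧ b = d := by
  constructor
  · refine Multiset.ext.2 fun z => ?_
    have hc := congrArg (Multiset.count (Sum.inl z : α ⊕ β)) h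
    rwa [Multiset.count_add, Multiset.count_add, count_inl_map_inr, count_inl_map_inr,
      Multiset.count_map_eq_count' _ _ Sum.inl_injective,
      Multiset.count_map_eq_count' _ _ Sum.inl_injective, add_zero, add_zero] at hc
  · refine Multiset.ext.2 fun z => ?_
    have hc := congrArg (Multiset.count (Sum.inr z : α ⊕ β)) h
    rwa [Multiset.count_add, Multiset.count_add, count_inr_map_inl, count_inr_map_inl,
      Multiset.count_map_eq_count' _ _ Sum.inr_injective,
      Multiset.count_map_eq_count' _ _ Sum.inr_injective, zero_add, zero_add] at hc

lemma Xof_msum (hG : G.Valid) [Finite G.next.E] (x : G.E) :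
    msum G.next (G.Xof x) = (S G x).map (Sum.inr : G.NewVert → G.next.V0 ⊕ G.next.V1) := by
  haveI : Finite G.NewEdge := ‹Finite G.next.E›
  refine Multiset.ext.2 fun q => ?_
  match q with
  | Sum.inl w =>
    erw [count_inl_map_inr]
    rw [Multiset.count_eq_zero]
    intro hmem
    obtain ⟨e, -, hb⟩ := Multiset.mem_map.1 hmem
    cases hb
  | Sum.inr p =>
    refine Eq.trans ?_ ((Multiset.count_map_eq_count' _ _ Sum.inr_injective _).trans (count_S G p x)).symm
    show ((G.Xof x).toFinite.toFinset.val.map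
      (fun e => (Sum.inr (G.next.s e) : G.next.V0 ⊕ G.next.V1))).count (Sum.inr p) = _
    erw [Multiset.count_map]
    have hf : (Multiset.filter
        (fun e => (Sum.inr p : G.next.V0 ⊕ G.next.V1) = Sum.inr (G.next.s e))
        (G.Xof x).toFinite.toFinset.val) =
        (Finset.filter (fun e : G.NewEdge => e.1 = p) (G.Xof x).toFinite.toFinset).val := by
      rw [Finset.filter_val]
      apply Multiset.filter_congr
      intro e _
      constructor
      · intro h; exact (Sum.inr_injective h).symm
      · intro h; exact congrArg Sum.inr h.symm
    rw [hf]
    show ((G.Xof x).toFinite.toFinset.filter (fun e : G.NewEdge => e.1 = p)).card = _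
    by_cases hh : hits G p x
    · rw [if_pos hh]
      obtain ⟨Xc, hXc⟩ := hh
      apply Finset.card_eq_one.2
      refine ⟨⟨p, Xc⟩, ?_⟩
      ext e
      simp only [Finset.mem_filter, Set.Finite.mem_toFinset, Finset.mem_singleton]
      constructor
      · rintro ⟨he, h1⟩
        obtain ⟨pe, Xe⟩ := e
        dsimp at h1
        subst h1
        have hXeXc : Xe = Xc := by
          apply classinj hG pe.1 pe.2
          show ((pe.2 Xe : G.E)) = ((pe.2 Xc : G.E))
          have he' : ((pe.2 Xe : G.E)) = x := he
          rw [he', hXc]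
        rw [hXeXc]
        exact Finset.mem_singleton_self _
      · intro hmem
        rw [Finset.mem_singleton.1 hmem]
        exact ⟨hXc, rfl⟩
    · rw [if_neg hh, Finset.card_eq_zero, Finset.filter_eq_empty_iff]
      rintro e he h1
      rw [Set.Finite.mem_toFinset] at he
      obtain ⟨pe, Xe⟩ := e
      dsimp at h1
      subst h1
      exact hh ⟨Xe, he⟩

noncomputable def Lg : G.V0 ⊕ G.V1 → FM (G.next) := fun p =>
  Sum.rec (fun u => (T G u).map (Sum.inr : G.NewVert → G.next.V0 ⊕ G.next.V1))
    (fun w => ({Sum.inl w} : FM (G.next))) p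

noncomputable def Lhom : FM G →+ FM (G.next) where
  toFun m := m.bind (Lg G)
  map_zero' := Multiset.zero_bind _
  map_add' a b := Multiset.add_bind a b _

lemma Lhom_single (p : G.V0 ⊕ G.V1) : Lhom G {p} = Lg G p :=
  Multiset.singleton_bind p (Lg G)

lemma addcon_sum {M : Type} [AddCommMonoid M] (c : AddCon M) {α : Type} (s : Finset α)
    (f g : α → M) (h : ∀ y ∈ s, c (f y) (g y)) : c (∑ y ∈ s, f y) (∑ y ∈ s, g y) := by
  classical
  induction s using Finset.induction_on with
  | empty => simpa using c.refl 0
  | @insert a s hni ih =>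
    rw [Finset.sum_insert hni, Finset.sum_insert hni]
    exact c.add (h _ (Finset.mem_insert_self _ _)) (ih fun y hy => h y (Finset.mem_insert_of_mem hy))

lemma con1_gen (hG : G.Valid) [Finite G.next.E] (x : G.E) :
    mcon (G.next) ({Sum.inl (G.s x)} : FM (G.next)) ((S G x).map Sum.inr) := by
  have h := mcon_of (G.next) (v := G.s x) (Y := G.Xof x) ⟨x, rfl, rfl⟩
  rwa [Xof_msum G hG x] at h

lemma Tmap_rel (hG : G.Valid) [Finite G.E] [Finite G.next.E] {v : G.V0} {Y : Set G.E}
    (hY : Y ∈ G.C v) :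
    mcon (G.next) ((T G v).map Sum.inr) (Y.toFinset.val.map (fun y => (Sum.inl (G.s y) : G.next.V0 ⊕ G.next.V1))) := by
  rw [← class_sum G hG hY]
  erw [show ((∑ y ∈ Y.toFinset, S G y).map (Sum.inr : G.NewVert → G.next.V0 ⊕ G.next.V1)) =
    ∑ y ∈ Y.toFinset, (S G y).map Sum.inr from map_sum (Multiset.mapAddMonoidHom Sum.inr) _ _]
  rw [← sum_singleton_map Y.toFinset (fun y => (Sum.inl (G.s y) : G.next.V0 ⊕ G.next.V1))]
  exact addcon_sum _ _ _ _ fun y _ => (mcon (G.next)).symm (con1_gen G hG y)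

lemma hker (hG : G.Valid) [Finite G.E] [Finite G.next.E] :
    mcon G ≤ AddCon.ker ((mcon (G.next)).mk'.comp (Lhom G)) := by
  apply AddCon.addConGen_le.2
  rintro a b ⟨v, Y, hY, rfl, rfl⟩
  rw [AddCon.ker_rel]
  simp only [AddMonoidHom.comp_apply]
  refine (AddCon.eq _).2 ?_
  rw [Lhom_single]
  have hLb : Lhom G (msum G Y) =
      Y.toFinset.val.map (fun y => (Sum.inl (G.s y) : G.next.V0 ⊕ G.next.V1)) := by
    show (msum G Y).bind (Lg G) = _
    unfold msum
    rw [Multiset.bind_map]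
    rw [show (fun e => Lg G (Sum.inr (G.s e))) = fun e : G.E =>
      ({Sum.inl (G.s e)} : FM (G.next)) from rfl]
    erw [Multiset.bind_singleton]
    congr 1
    exact congrArg Finset.val (Set.toFinite_toFinset Y)
  rw [hLb]
  exact Tmap_rel G hG hY

noncomputable def phim (hG : G.Valid) [Finite G.E] [Finite G.next.E] :
    (mcon G).Quotient →+ (mcon (G.next)).Quotient :=
  (mcon G).lift ((mcon (G.next)).mk'.comp (Lhom G)) (hker G hG)

lemma phim_mk (hG : G.Valid) [Finite G.E] [Finite G.next.E] (f : FM G) :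
    phim G hG ((mcon G).mk' f) = (mcon (G.next)).mk' (Lhom G f) := by
  unfold phim
  rw [AddCon.lift_mk']
  rfl

end Next
end Stmt15Aux
namespace Stmt15Aux
open Multiset

attribute [local instance] Classical.propDecidable

section Chain

variable (G : BSG) [Fintype G.E] [Fintype G.NewVert]

def Step (g g' : FM (G.next)) : Prop :=
  ∃ (h : FM (G.next)) (x : G.E),
    (g = h + ({Sum.inl (G.s x)} : FM (G.next)) ∧ g' = h + (S G x).map Sum.inr) ∨
    (g' = h + ({Sum.inl (G.s x)} : FM (G.next)) ∧ g = h + (S G x).map Sum.inr)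

lemma step_symm : Symmetric (Step G) := by
  rintro a b ⟨h, x, hc⟩
  exact ⟨h, x, hc.symm⟩

lemma step_add (z : FM (G.next)) {a b : FM (G.next)} (h : Step G a b) :
    Step G (a + z) (b + z) := by
  obtain ⟨hh, x, hc⟩ := h
  refine ⟨hh + z, x, ?_⟩
  rcases hc with ⟨e1, e2⟩ | ⟨e1, e2⟩
  · exact Or.inl ⟨by rw [e1, add_right_comm], by rw [e2]; exact add_right_comm _ _ _⟩
  · exact Or.inr ⟨by rw [e1, add_right_comm], by rw [e2]; exact add_right_comm _ _ _⟩

lemma rtg_add (z : FM (G.next)) {a b : FM (G.next)}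
    (h : Relation.ReflTransGen (Step G) a b) :
    Relation.ReflTransGen (Step G) (a + z) (b + z) := by
  induction h with
  | refl => exact .refl
  | tail _ hstep ih => exact ih.tail (step_add G z hstep)

def chainCon : AddCon (FM (G.next)) :=
  ⟨⟨Relation.ReflTransGen (Step G),
    ⟨fun _ => .refl, fun h => (@Relation.ReflTransGen.stdSymm _ (Step G) ⟨fun _ _ h => step_symm G h⟩).symm _ _ h,
     fun h1 h2 => h1.trans h2⟩⟩,
   by
     intro a b c d h1 h2
     have k1 := rtg_add G c h1
     have k2 := rtg_add G b h2
     rw [add_comm c b, add_comm d b] at k2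
     exact k1.trans k2⟩

lemma chain_of_con (hG : G.Valid) [Finite G.next.E] {a b : FM (G.next)}
    (h : mcon (G.next) a b) : Relation.ReflTransGen (Step G) a b := by
  have hle : mcon (G.next) ≤ chainCon G := by
    apply AddCon.addConGen_le.2
    rintro a b ⟨w, Y, hY, rfl, rfl⟩
    obtain ⟨x, hxw, rfl⟩ := hY
    show Relation.ReflTransGen (Step G) _ _
    rw [Xof_msum G hG x]
    refine Relation.ReflTransGen.single ⟨0, x, Or.inl ⟨?_, ?_⟩⟩
    · rw [zero_add, hxw]; rfl
    · exact (zero_add _).symm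
  exact AddCon.le_def.1 hle h

variable [Finite G.E]

def Good (g : FM (G.next)) (m : (mcon G).Quotient) : Prop :=
  ∃ (β : Multiset G.V1) (n : G.E → ℕ),
    g = β.map Sum.inl + (sumS G n).map Sum.inr ∧
    m = (mcon G).mk' (β.map Sum.inr + imgE G n)

lemma cons_shuffle {gam : Type} (a : gam) (s t : Multiset gam) :
    (a ::ₘ s) + t = (s + t) + {a} := by
  rw [← Multiset.singleton_add, add_comm ({a} : Multiset gam) s, add_assoc, add_assoc]
  rw [add_comm ({a} : Multiset gam) t]

lemma cons_shuffle' {gam : Type} (a : gam) (s t : Multiset gam) :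
    (a ::ₘ s) + t = s + (t + {a}) := by
  rw [cons_shuffle, add_assoc]

lemma sumS_inc_single (n : G.E → ℕ) (x : G.E) :
    sumS G (inc n {x}) = sumS G n + S G x := by
  show ∑ y : G.E, inc n {x} y • S G y = _
  rw [sum_inc]
  congr 1
  rw [Set.toFinset_singleton, Finset.sum_singleton]

lemma imgE_inc_single (n : G.E → ℕ) (x : G.E) :
    imgE G (inc n {x}) = imgE G n + {Sum.inr (G.s x)} := by
  show ∑ y : G.E, inc n {x} y • ({Sum.inr (G.s y)} : FM G) = _
  rw [sum_inc]
  congr 1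
  rw [Set.toFinset_singleton, Finset.sum_singleton]

lemma sumS_dec_single (n : G.E → ℕ) (x : G.E) (h : 1 ≤ n x) :
    sumS G n = sumS G (dec n {x}) + S G x := by
  have hs := sum_split G (S G) n {x} (by
    intro y hy
    rw [Set.mem_singleton_iff] at hy
    subst hy
    exact h)
  rw [Set.toFinset_singleton, Finset.sum_singleton] at hs
  exact hs

lemma imgE_dec_single (n : G.E → ℕ) (x : G.E) (h : 1 ≤ n x) :
    imgE G n = imgE G (dec n {x}) + {Sum.inr (G.s x)} := by
  have hs := sum_split G (fun y => ({Sum.inr (G.s y)} : FM G)) n {x} (by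
    intro y hy
    rw [Set.mem_singleton_iff] at hy
    subst hy
    exact h)
  rw [Set.toFinset_singleton, Finset.sum_singleton] at hs
  exact hs

lemma moveA (h : FM (G.next)) (x : G.E) {m : (mcon G).Quotient}
    (hg : Good G (h + ({Sum.inl (G.s x)} : FM (G.next))) m) :
    Good G (h + (S G x).map Sum.inr) m := by
  obtain ⟨β, n, hfe, hm⟩ := hg
  have hwβ : G.s x ∈ β := by
    have hc := congrArg (Multiset.count (Sum.inl (G.s x) : G.next.V0 ⊕ G.next.V1)) hfe
    erw [Multiset.count_add, Multiset.count_add, count_inl_map_inr,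
      Multiset.count_map_eq_count' _ _ Sum.inl_injective,
      Multiset.count_singleton_self] at hc
    exact Multiset.count_pos.1 ((Nat.succ_pos _).trans_le (hc.trans (add_zero _)).le)
  have hβ : β = G.s x ::ₘ β.erase (G.s x) := (Multiset.cons_erase hwβ).symm
  have hfe' : h = (β.erase (G.s x)).map (Sum.inl : G.next.V0 → G.next.V0 ⊕ G.next.V1) +
      (sumS G n).map Sum.inr := by
    have key : h + ({Sum.inl (G.s x)} : FM (G.next)) =
        ((β.erase (G.s x)).map (Sum.inl : G.next.V0 → G.next.V0 ⊕ G.next.V1) +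
          (sumS G n).map Sum.inr) + ({Sum.inl (G.s x)} : FM (G.next)) := by
      rw [hfe]
      conv_lhs => rw [hβ]
      rw [Multiset.map_cons]
      exact cons_shuffle _ _ _
    exact add_right_cancel key
  refine ⟨β.erase (G.s x), inc n {x}, ?_, ?_⟩
  · rw [hfe', sumS_inc_single, Multiset.map_add]; exact add_assoc _ _ _
  · rw [hm]
    congr 1
    rw [imgE_inc_single]
    conv_lhs => rw [hβ]
    rw [Multiset.map_cons]
    exact cons_shuffle' _ _ _

lemma moveB (hG : G.Valid) (h : FM (G.next)) (x : G.E) {m : (mcon G).Quotient}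
    (hg : Good G (h + (S G x).map Sum.inr) m) :
    Good G (h + ({Sum.inl (G.s x)} : FM (G.next))) m := by
  obtain ⟨β, n, hfe, hm⟩ := hg
  have hc : ∀ p : G.NewVert, hits G p x → 1 ≤ (sumS G n).count p := by
    intro p hp
    have hcc := congrArg (Multiset.count (Sum.inr p : G.next.V0 ⊕ G.next.V1)) hfe
    erw [Multiset.count_add, Multiset.count_add, count_inr_map_inl,
      Multiset.count_map_eq_count' _ _ Sum.inr_injective,
      Multiset.count_map_eq_count' _ _ Sum.inr_injective] at hcc
    have h1 : (S G x).count p = 1 := by rw [count_S, if_pos hp]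
    exact (h1.symm.le.trans (Nat.le_add_left _ _)).trans (hcc.trans (zero_add _)).le
  obtain ⟨n', hs', hx', hrel⟩ := exists_decomp_pos G hG hc
  have hfe2 : h = β.map (Sum.inl : G.next.V0 → G.next.V0 ⊕ G.next.V1) +
      (sumS G (dec n' {x})).map Sum.inr := by
    have e1 : sumS G n = sumS G (dec n' {x}) + S G x := by
      rw [← hs']
      exact sumS_dec_single G n' x hx'
    have key : h + (S G x).map Sum.inr =
        (β.map (Sum.inl : G.next.V0 → G.next.V0 ⊕ G.next.V1) +
          (sumS G (dec n' {x})).map Sum.inr) + (S G x).map Sum.inr := by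
      rw [hfe, e1, Multiset.map_add]; exact (add_assoc _ _ _).symm
    exact add_right_cancel key
  refine ⟨G.s x ::ₘ β, dec n' {x}, ?_, ?_⟩
  · rw [hfe2, Multiset.map_cons]
    exact (cons_shuffle _ _ _).symm
  · rw [hm]
    have e2 : imgE G n' = imgE G (dec n' {x}) + {Sum.inr (G.s x)} :=
      imgE_dec_single G n' x hx'
    have e3 : ((G.s x ::ₘ β).map (Sum.inr : G.V1 → G.V0 ⊕ G.V1) + imgE G (dec n' {x})) =
        β.map Sum.inr + imgE G n' := by
      rw [Multiset.map_cons, e2]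
      exact cons_shuffle' _ _ _
    rw [e3]
    exact (AddCon.eq _).2 ((mcon G).add ((mcon G).refl _) hrel)

lemma chain_good (hG : G.Valid) {g g' : FM (G.next)} {m : (mcon G).Quotient}
    (h : Relation.ReflTransGen (Step G) g g') (hg : Good G g m) : Good G g' m := by
  induction h with
  | refl => exact hg
  | tail _ hstep ih =>
    obtain ⟨hh, x, hcase⟩ := hstep
    rcases hcase with ⟨e1, e2⟩ | ⟨e1, e2⟩
    · rw [e2]
      rw [e1] at ih
      exact moveA G hh x ih
    · rw [e1]
      rw [e2] at ih
      exact moveB G hG hh x ih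

lemma sumS_addf (n1 n2 : G.E → ℕ) :
    sumS G (fun y => n1 y + n2 y) = sumS G n1 + sumS G n2 := by
  unfold sumS
  rw [← Finset.sum_add_distrib]
  exact Finset.sum_congr rfl fun y _ => add_nsmul _ _ _

lemma imgE_addf (n1 n2 : G.E → ℕ) :
    imgE G (fun y => n1 y + n2 y) = imgE G n1 + imgE G n2 := by
  unfold imgE
  rw [← Finset.sum_add_distrib]
  exact Finset.sum_congr rfl fun y _ => add_nsmul _ _ _

lemma Good_add {g1 g2 : FM (G.next)} {m1 m2 : (mcon G).Quotient}
    (h1 : Good G g1 m1) (h2 : Good G g2 m2) : Good G (g1 + g2) (m1 + m2) := by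
  obtain ⟨β1, n1, hfe1, hm1⟩ := h1
  obtain ⟨β2, n2, hfe2, hm2⟩ := h2
  refine ⟨β1 + β2, fun y => n1 y + n2 y, ?_, ?_⟩
  · rw [hfe1, hfe2, sumS_addf, Multiset.map_add, Multiset.map_add]
    exact add_add_add_comm _ _ _ _
  · rw [hm1, hm2, ← _root_.map_add ((mcon G).mk')]
    congr 1
    rw [imgE_addf, Multiset.map_add]
    exact (add_add_add_comm _ _ _ _).symm

lemma sumS_zero : sumS G (fun _ => 0) = 0 := by
  unfold sumS
  simp

lemma imgE_zero : imgE G (fun _ => 0) = 0 := by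
  unfold imgE
  simp

lemma Good_gen (hG : G.Valid) (p : G.V0 ⊕ G.V1) :
    Good G (Lg G p) ((mcon G).mk' {p}) := by
  match p with
  | Sum.inl u =>
    obtain ⟨X₀, hX₀⟩ := hG.C_nonempty u
    refine ⟨0, inc (fun _ => 0) X₀, ?_, ?_⟩
    · have h1 : sumS G (inc (fun _ => 0) X₀) = T G u := by
        show ∑ y : G.E, inc (fun _ => 0) X₀ y • S G y = _
        rw [sum_inc, ← class_sum G hG hX₀]
        simp
      show (T G u).map Sum.inr = _
      rw [h1]
      simp
      exact (zero_add _).symm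
    · have h2 : imgE G (inc (fun _ => 0) X₀) = rho G X₀ := by
        show ∑ y : G.E, inc (fun _ => 0) X₀ y • ({Sum.inr (G.s y)} : FM G) = _
        rw [sum_inc]
        simp [rho]
      rw [h2]
      show ((mcon G).mk' {Sum.inl u} : (mcon G).Quotient) =
        (mcon G).mk' ((0 : Multiset G.V1).map Sum.inr + rho G X₀)
      rw [Multiset.map_zero, zero_add]
      exact (AddCon.eq _).2 (rho_rel G hX₀)
  | Sum.inr w =>
    refine ⟨{w}, fun _ => 0, ?_, ?_⟩
    · show ({Sum.inl w} : FM (G.next)) = _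
      rw [sumS_zero]
      simp
      exact (add_zero _).symm
    · rw [imgE_zero]
      simp

lemma Good_L (hG : G.Valid) (f : FM G) : Good G (Lhom G f) ((mcon G).mk' f) := by
  induction f using Multiset.induction_on with
  | empty =>
    refine ⟨0, fun _ => 0, ?_, ?_⟩
    · rw [sumS_zero]
      simp
      exact (add_zero _).symm
    · rw [imgE_zero]
      simp
  | cons p f ih =>
    rw [← Multiset.singleton_add, _root_.map_add (Lhom G), Lhom_single,
      _root_.map_add ((mcon G).mk')]
    exact Good_add G (Good_gen G hG p) ih

lemma bindT_decomp (hG : G.Valid) (l : Multiset G.V0) : ∃ n₀ : G.E → ℕ,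
    sumS G n₀ = l.bind (fun u => T G u) ∧ mcon G (l.map Sum.inl) (imgE G n₀) := by
  induction l using Multiset.induction_on with
  | empty =>
    refine ⟨fun _ => 0, ?_, ?_⟩
    · rw [sumS_zero, Multiset.zero_bind]
    · rw [imgE_zero]
      simpa using (mcon G).refl 0
  | cons u l ih =>
    obtain ⟨n₀, hs, hrel⟩ := ih
    obtain ⟨X₀, hX₀⟩ := hG.C_nonempty u
    refine ⟨inc n₀ X₀, ?_, ?_⟩
    · show ∑ y : G.E, inc n₀ X₀ y • S G y = _
      rw [sum_inc, class_sum G hG hX₀, Multiset.cons_bind]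
      show sumS G n₀ + T G u = _
      rw [hs, add_comm]
    · rw [Multiset.map_cons, ← Multiset.singleton_add]
      have himg : imgE G (inc n₀ X₀) = imgE G n₀ + rho G X₀ := sum_inc G _ _ _
      rw [himg, add_comm (imgE G n₀) (rho G X₀)]
      exact (mcon G).add (rho_rel G hX₀) hrel

lemma exists_split {α β : Type} (f : Multiset (α ⊕ β)) :
    ∃ (l : Multiset α) (r : Multiset β), f = l.map Sum.inl + r.map Sum.inr := by
  induction f using Multiset.induction_on with
  | empty => exact ⟨0, 0, by simp⟩
  | cons p f ih =>
    obtain ⟨l, r, rfl⟩ := ih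
    match p with
    | Sum.inl a =>
      exact ⟨a ::ₘ l, r, by rw [Multiset.map_cons, Multiset.cons_add]⟩
    | Sum.inr b =>
      refine ⟨l, b ::ₘ r, ?_⟩
      rw [Multiset.map_cons, Multiset.add_cons]

lemma Good_unique (hG : G.Valid) {f : FM G} {m : (mcon G).Quotient}
    (hg : Good G (Lhom G f) m) : m = (mcon G).mk' f := by
  obtain ⟨l, r, rfl⟩ := exists_split f
  obtain ⟨β, n, hfe, hm⟩ := hg
  have hL : Lhom G (l.map Sum.inl + r.map Sum.inr) =
      r.map (Sum.inl : G.next.V0 → G.next.V0 ⊕ G.next.V1) +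
        (l.bind (fun u => T G u)).map Sum.inr := by
    show (l.map Sum.inl + r.map Sum.inr).bind (Lg G) = _
    rw [Multiset.add_bind, Multiset.bind_map, Multiset.bind_map]
    rw [show (fun u => Lg G (Sum.inl u)) = fun u : G.V0 =>
      (T G u).map (Sum.inr : G.NewVert → G.next.V0 ⊕ G.next.V1) from rfl]
    rw [show (fun w => Lg G (Sum.inr w)) = fun w : G.V1 =>
      ({Sum.inl w} : FM (G.next)) from rfl]
    erw [Multiset.bind_singleton, ← Multiset.map_bind]
    exact add_comm _ _
  rw [hL] at hfe
  obtain ⟨hβ, hsum⟩ := parts_eq hfe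
  obtain ⟨n₀, hs0, hrel0⟩ := bindT_decomp G hG l
  have hnn : sumS G n₀ = sumS G n := by rw [hs0, hsum]
  have himg : mcon G (imgE G n₀) (imgE G n) := decomp_unique G hG _ n₀ n rfl hnn
  rw [hm, ← hβ]
  refine (AddCon.eq _).2 ?_
  have c1 : mcon G (r.map Sum.inr + imgE G n) (r.map Sum.inr + imgE G n₀) :=
    (mcon G).add ((mcon G).refl _) ((mcon G).symm himg)
  have c2 : mcon G (r.map Sum.inr + imgE G n₀) (r.map Sum.inr + l.map Sum.inl) :=
    (mcon G).add ((mcon G).refl _) ((mcon G).symm hrel0)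
  refine c1.trans (c2.trans ?_)
  rw [add_comm]
  exact (mcon G).refl _

lemma phim_inj (hG : G.Valid) [Finite G.next.E] : Function.Injective (phim G hG) := by
  intro q1 q2 h
  revert h
  refine AddCon.induction_on₂ q1 q2 fun f f' => ?_
  intro h
  have h1 : (mcon (G.next)).mk' (Lhom G f) = (mcon (G.next)).mk' (Lhom G f') := by
    rw [← phim_mk G hG, ← phim_mk G hG]
    exact h
  have h2 : mcon (G.next) (Lhom G f) (Lhom G f') := (AddCon.eq _).1 h1
  have h3 := chain_of_con G hG h2
  have h4 : Good G (Lhom G f') ((mcon G).mk' f) := chain_good G hG h3 (Good_L G hG f)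
  exact Good_unique G hG h4

lemma phim_gen_inl (hG : G.Valid) [Finite G.next.E] (u : G.V0) :
    phim G hG (mA G (Sum.inl u)) =
      ∑ t : ((X : {X : Set G.E // X ∈ G.C u}) → ↥X.1),
        mA (G.next) (Sum.inr (⟨u, t⟩ : G.NewVert)) := by
  rw [show mA G (Sum.inl u) = (mcon G).mk' {Sum.inl u} from rfl, phim_mk, Lhom_single]
  show (mcon (G.next)).mk' ((T G u).map Sum.inr) = _
  have hinj : Function.Injective (fun t : ((X : {X : Set G.E // X ∈ G.C u}) → ↥X.1) =>
      (⟨u, t⟩ : G.NewVert)) := by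
    intro t1 t2 h12
    have h12' : (⟨u, t1⟩ : Σ v : G.V0, (X : {X : Set G.E // X ∈ G.C v}) → ↥X.1) = ⟨u, t2⟩ := h12
    simpa using h12'
  have hfe : Finset.univ.filter (fun p : G.NewVert => p.1 = u) =
      Finset.univ.map ⟨fun t => (⟨u, t⟩ : G.NewVert), hinj⟩ := by
    ext p
    simp only [Finset.mem_filter, Finset.mem_univ, true_and, Finset.mem_map,
      Function.Embedding.coeFn_mk]
    constructor
    · obtain ⟨v, t⟩ := p
      rintro rfl
      exact Finset.mem_map.2 ⟨t, Finset.mem_univ _, rfl⟩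
    · intro hmem
      obtain ⟨t, -, rfl⟩ := Finset.mem_map.1 hmem
      rfl
  have hTT : (T G u).map (Sum.inr : G.NewVert → G.next.V0 ⊕ G.next.V1) =
      ∑ t : ((X : {X : Set G.E // X ∈ G.C u}) → ↥X.1),
        ({Sum.inr (⟨u, t⟩ : G.NewVert)} : FM (G.next)) := by
    erw [sum_singleton_map Finset.univ
      (fun t : ((X : {X : Set G.E // X ∈ G.C u}) → ↥X.1) =>
        (Sum.inr (⟨u, t⟩ : G.NewVert) : G.next.V0 ⊕ G.next.V1))]
    show (T G u).map _ = _
    unfold T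
    erw [hfe, Finset.map_val, Multiset.map_map]
    rfl
  erw [hTT, map_sum ((mcon (G.next)).mk')]
  rfl

lemma phim_gen_inr (hG : G.Valid) [Finite G.next.E] (w : G.V1) :
    phim G hG (mA G (Sum.inr w)) = mA (G.next) (Sum.inl w) := by
  rw [show mA G (Sum.inr w) = (mcon G).mk' {Sum.inr w} from rfl, phim_mk, Lhom_single]
  rfl

end Chain
end Stmt15Aux

/-- Lemma 4.2(b): the assignment `a_u ↦ Σ_{(x₁,…,x_{k_u})} a_{v(x₁,…,x_{k_u})}` for
`u ∈ E_n^{0,0}` and `a_w ↦ a_w` for `w ∈ E_n^{0,1}` extends to a well-defined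
injective monoid homomorphism `ι_n : M(E_n,C^n) → M(E_{n+1},C^{n+1})`. -/
theorem stmt15 (G : BSG) (hG : G.Valid)
    {M0 M1 : Type} [AddCommMonoid M0] [AddCommMonoid M1]
    (a0 : G.V0 ⊕ G.V1 → M0) (h0 : IsBipGraphMonoid G a0)
    (a1 : G.next.V0 ⊕ G.next.V1 → M1) (h1 : IsBipGraphMonoid G.next a1) :
    ∃ φ : M0 →+ M1,
      (∀ u : G.V0, φ (a0 (Sum.inl u)) =
        ∑ᶠ t : ((X : {X : Set G.E // X ∈ G.C u}) → ↥X.1),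
          a1 (Sum.inr (⟨u, t⟩ : G.NewVert))) ∧
      (∀ w : G.V1, φ (a0 (Sum.inr w)) = a1 (Sum.inl w)) ∧
      Function.Injective φ := by
  classical
  haveI : Finite G.E := hG.finE
  haveI : Finite G.V0 := hG.finV0
  haveI : Finite G.V1 := hG.finV1
  haveI : Fintype G.E := Fintype.ofFinite _
  haveI hWfin : Finite G.NewVert := by unfold BSG.NewVert; infer_instance
  haveI : Fintype G.NewVert := Fintype.ofFinite _
  haveI hEfin : Finite G.NewEdge := by unfold BSG.NewEdge; infer_instance
  haveI : Finite G.next.E := hEfin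
  obtain ⟨e0, e0', he0, he0', hretr0⟩ := Stmt15Aux.transfer G h0 (Stmt15Aux.model_isBip G)
  obtain ⟨e1, e1', he1, he1', hretr1⟩ :=
    Stmt15Aux.transfer G.next (Stmt15Aux.model_isBip G.next) h1
  refine ⟨e1.comp ((Stmt15Aux.phim G hG).comp e0), ?_, ?_, ?_⟩
  · intro u
    rw [AddMonoidHom.comp_apply, AddMonoidHom.comp_apply, he0 (Sum.inl u),
      Stmt15Aux.phim_gen_inl G hG u, map_sum, finsum_eq_sum_of_fintype]
    exact Finset.sum_congr rfl fun t _ => he1 _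
  · intro w
    rw [AddMonoidHom.comp_apply, AddMonoidHom.comp_apply, he0 (Sum.inr w),
      Stmt15Aux.phim_gen_inr G hG w]
    exact he1 _
  · rw [AddMonoidHom.coe_comp, AddMonoidHom.coe_comp]
    exact (Function.LeftInverse.injective hretr1).comp
      ((Stmt15Aux.phim_inj G hG).comp (Function.LeftInverse.injective hretr0))
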